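/- arXiv:2306.12683 — 4 statements merged into one kernel-verified Lean document; each statement's English description precedes it below -/
import Mathlib

section
/- Let V be the category with three objects a, b, c, whose only non-identity morphisms are α : a → c and β : b → c, and let A : V ⥤ Ab be the diagram with A(c) = A and A(a) = A(b) = 0 for an abelian group A. Then H^0(V, A) = 0, H^1(V, A) ≅ A, and H^n(V, A) = 0 for all n ≥ 2. -/
/- Auxiliary general constructions -/

open CategoryTheory Limits Opposite Simplicial

universe w v u

namespace CatCohomology

section Bar

variable {A : Type u} [Category.{v} A]

/-- The group of `Δ`-cochains of a category `A` with coefficients in a bimodule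
`G : Aᵒᵖ × A ⥤ Ab`: the product over all `Δ`-simplices `τ` of the nerve of `A` of
the groups `G (τ 0, τ (last))`. -/
noncomputable def barObj (G : Aᵒᵖ × A ⥤ AddCommGrpCat.{w}) (Δ : SimplexCategory) :
    AddCommGrpCat.{max u v w} :=
  AddCommGrpCat.of (∀ τ : (nerve A).obj (op Δ), G.obj (op (τ.obj 0), τ.obj (Fin.last Δ.len)))

/-- The cosimplicial abelian group of cochains on the nerve of `A` with coefficients in
a bimodule `G : Aᵒᵖ × A ⥤ Ab`.  Its alternating coface map complex is the standard
cochain complex computing the (Hochschild-Mitchell style) cohomology of the small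
category `A` with coefficients in `G`. -/
noncomputable def barCosimplicial (G : Aᵒᵖ × A ⥤ AddCommGrpCat.{w}) :
    CosimplicialObject AddCommGrpCat.{max u v w} where
  obj Δ := barObj G Δ
  map {Δ₁ Δ₂} g := AddCommGrpCat.ofHom (AddMonoidHom.mk'
    (fun (φ : barObj G Δ₁) (τ : (nerve A).obj (op Δ₂)) =>
        G.map ((τ.map (homOfLE (Fin.zero_le _))).op,
        τ.map (homOfLE (Fin.le_last _))) (φ ((nerve A).map g.op τ)))
    (by intro φ ψ; funext τ; exact map_add _ _ _))
  map_id Δ := by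
    ext φ τ
    show G.map ((τ.map (𝟙 (0 : Fin (Δ.len + 1)))).op, τ.map (𝟙 (Fin.last Δ.len))) (φ τ) = φ τ
    rw [τ.map_id, τ.map_id]
    show G.map (𝟙 (op (τ.obj 0), τ.obj (Fin.last Δ.len))) (φ τ) = φ τ
    rw [G.map_id]; rfl
  map_comp {Δ₁ Δ₂ Δ₃} g h := by
    ext φ τ
    show G.map _ (φ _) = G.map _ (G.map _ (φ ((nerve A).map g.op ((nerve A).map h.op τ))))
    rw [← CategoryTheory.comp_apply, ← G.map_comp]
    apply congrFun; apply congrArg; apply congrArg; apply congrArg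
    refine Prod.ext ?_ ?_
    · show (τ.map (homOfLE _)).op =
        ((((nerve A).map h.op τ).map (homOfLE _)).op ≫ (τ.map (homOfLE _)).op)
      apply Quiver.Hom.unop_inj
      show τ.map _ = τ.map _ ≫ τ.map _
      rw [← τ.map_comp]; congr 1
    · show τ.map (homOfLE _) = (((nerve A).map h.op τ).map (homOfLE _) ≫ τ.map (homOfLE _))
      show τ.map _ = τ.map _ ≫ τ.map _
      rw [← τ.map_comp]; congr 1

/-- The standard cochain complex of a small category with coefficients in a bimodule
`G : Aᵒᵖ × A ⥤ Ab` (with the alternating sum differentials). -/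
noncomputable def cochainComplex (G : Aᵒᵖ × A ⥤ AddCommGrpCat.{w}) :
    CochainComplex AddCommGrpCat.{max u v w} ℕ :=
  (AlgebraicTopology.alternatingCofaceMapComplex _).obj (barCosimplicial G)

/-- The cohomology of a small category with coefficients in a bimodule,
i.e. the Hochschild-Mitchell cohomology `H*(A, G) = Ext*(ℤA, G)` computed by the
standard cochain complex. -/
noncomputable def cohomology (G : Aᵒᵖ × A ⥤ AddCommGrpCat.{w}) (n : ℕ) :
    AddCommGrpCat.{max u v w} :=
  (cochainComplex G).homology n

end Bar

section BarMaps

variable {A : Type u} [Category.{v} A] {B : Type u} [Category.{v} B]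

/-- Restriction of cochains along a functor `f : A ⥤ B`:
the canonical map of cosimplicial abelian groups. -/
noncomputable def barRestriction (f : A ⥤ B) (G : Bᵒᵖ × B ⥤ AddCommGrpCat.{w}) :
    barCosimplicial (A := B) G ⟶ barCosimplicial (f.op.prod f ⋙ G) where
  app Δ := AddCommGrpCat.ofHom (AddMonoidHom.mk'
    (fun (φ : barObj (A := B) G Δ) (τ : (nerve A).obj (op Δ)) => φ (τ ⋙ f))
    (by intro φ ψ; funext τ; rfl))
  naturality {Δ₁ Δ₂} g := by
    ext φ; funext τ
    rfl

/-- The canonical homomorphism `H^n(B, G) ⟶ H^n(A, G ∘ (fᵒᵖ × f))` on the cohomology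
of small categories with coefficients in bimodules, induced by the inverse image along
`f : A ⥤ B` (restriction of cochains). -/
noncomputable def cohomologyMap (f : A ⥤ B) (G : Bᵒᵖ × B ⥤ AddCommGrpCat.{w}) (n : ℕ) :
    cohomology (A := B) G n ⟶ cohomology (f.op.prod f ⋙ G) n :=
  HomologicalComplex.homologyMap
    ((AlgebraicTopology.alternatingCofaceMapComplex _).map (barRestriction f G)) n

/-- The cohomology `H^n(A, G) = Ext^n(Δℤ, G) = lim^n G` of a small category `A` with
coefficients in a diagram of abelian groups `G : A ⥤ Ab`, computed by the standard
cochain complex `C^n(A, G) = ∏_{a₀ → ⋯ → aₙ} G(aₙ)`. -/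
noncomputable def diagCohomology (G : A ⥤ AddCommGrpCat.{w}) (n : ℕ) :
    AddCommGrpCat.{max u v w} :=
  cohomology (CategoryTheory.Prod.snd Aᵒᵖ A ⋙ G) n

/-- The canonical homomorphism `H^n(B, G) ⟶ H^n(A, G ∘ f)` for a functor `f : A ⥤ B`
and a diagram `G : B ⥤ Ab`, induced by the (exact) inverse image functor
`f^* : Ab^B ⥤ Ab^A` (restriction of cochains along `f`). -/
noncomputable def diagCohomologyMap (f : A ⥤ B) (G : B ⥤ AddCommGrpCat.{w}) (n : ℕ) :
    diagCohomology G n ⟶ diagCohomology (f ⋙ G) n :=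
  cohomologyMap f (CategoryTheory.Prod.snd Bᵒᵖ B ⋙ G) n

end BarMaps

/-- The diagram on the category `V = (a ⟶ c ⟵ b)` (the walking cospan) with value `A`
at the vertex `c` and value `0` at `a` and `b`. -/
noncomputable def Vdiag (A : AddCommGrpCat.{u}) : WalkingCospan ⥤ AddCommGrpCat.{u} :=
  WidePullbackShape.wideCospan A (fun _ => AddCommGrpCat.of PUnit) (fun _ => 0)

end CatCohomology

open CatCohomology

/-! ## Auxiliary lemmas for the proof of `statement2` -/

namespace Statement2Aux

open AlgebraicTopology

variable {A : AddCommGrpCat.{u}}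

/-- Chains in the walking cospan. -/
abbrev Ch (n : ℕ) := ComposableArrows WalkingCospan n

/-- The cochain complex computing `H^*(V, Vdiag A)`. -/
noncomputable abbrev KK (A : AddCommGrpCat.{u}) : CochainComplex AddCommGrpCat.{u} ℕ :=
  cochainComplex (CategoryTheory.Prod.snd WalkingCospanᵒᵖ WalkingCospan ⋙ Vdiag A)

lemma diagCohomology_eq (A : AddCommGrpCat.{u}) (n : ℕ) :
    diagCohomology (Vdiag A) n = (KK A).homology n := rfl

/-- The unique morphism to the terminal object `none`. -/
noncomputable def toNoneHom : ∀ x : WalkingCospan, x ⟶ (none : WalkingCospan) := fun x => match x with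
  | none => WidePullbackShape.Hom.id none
  | some j => WidePullbackShape.Hom.term j

lemma hom_subsingleton {x y : WalkingCospan} (f g : x ⟶ y) : f = g :=
  Subsingleton.elim f g

lemma eq_some_of_hom {x : WalkingCospan} {j : WalkingPair} (f : x ⟶ (some j : WalkingCospan)) : x = some j := by
  change WidePullbackShape.Hom _ _ at f
  cases f <;> rfl

lemma chain_ext {n : ℕ} {σ τ : Ch n} (h : ∀ i, σ.obj i = τ.obj i) : σ = τ :=
  CategoryTheory.Functor.ext h (fun _ _ _ => hom_subsingleton _ _)

lemma obj_eq_some_of_le {n : ℕ} (τ : Ch n) {i j : Fin (n+1)} (hij : i ≤ j) {c : WalkingPair}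
    (hj : τ.obj j = some c) : τ.obj i = some c := by
  have f := τ.map (homOfLE hij)
  rw [hj] at f
  exact eq_some_of_hom f

lemma vd_some {x : WalkingCospan} {j : WalkingPair} (hx : x = some j)
    (a : ((Vdiag A).obj x : Type u)) : a = 0 := by
  subst hx
  exact (inferInstance : Subsingleton PUnit).elim a 0

/-- An element of `(KK A).X n` is a dependent function on chains. -/
lemma KX_eq (n : ℕ) : ((KK A).X n : Type u) =
    (∀ τ : Ch n, ((Vdiag A).obj (τ.obj (Fin.last n)) : Type u)) := rfl

/-- Evaluation of a cochain at a chain, pushed into `A`. -/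
noncomputable def ev {n : ℕ} (φ : ((KK A).X n : Type u)) (σ : Ch n) : A :=
  (Vdiag A).map (toNoneHom (σ.obj (Fin.last n))) (φ σ)

lemma ev_add {n : ℕ} (φ ψ : ((KK A).X n : Type u)) (σ : Ch n) :
    ev (φ + ψ) σ = ev φ σ + ev ψ σ := by
  unfold ev
  rw [show (φ + ψ) σ = φ σ + ψ σ from rfl, map_add]
  rfl

lemma ev_zero {n : ℕ} (σ : Ch n) : ev (0 : ((KK A).X n : Type u)) σ = 0 := by
  unfold ev
  rw [show (0 : ((KK A).X n : Type u)) σ = 0 from rfl, map_zero]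
  rfl

lemma ev_ends_some {n : ℕ} {σ : Ch n} {j : WalkingPair} (hσ : σ.obj (Fin.last n) = some j)
    (φ : ((KK A).X n : Type u)) : ev φ σ = 0 := by
  unfold ev
  rw [vd_some hσ (φ σ), map_zero]
  rfl

lemma ev_inj_aux {x : WalkingCospan} (hx : x = none) {a b : ((Vdiag A).obj x : Type u)}
    (h : (Vdiag A).map (toNoneHom x) a = (Vdiag A).map (toNoneHom x) b) : a = b := by
  subst hx
  rwa [show toNoneHom none = WidePullbackShape.Hom.id none from rfl, WidePullbackShape.hom_id,
    CategoryTheory.Functor.map_id] at h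

lemma cochain_ext {n : ℕ} {φ ψ : ((KK A).X n : Type u)} (h : ∀ σ : Ch n, ev φ σ = ev ψ σ) :
    φ = ψ := by
  funext σ
  obtain hx | ⟨j, hx⟩ : σ.obj (Fin.last n) = none ∨ ∃ j, σ.obj (Fin.last n) = some j := by
    cases σ.obj (Fin.last n) <;> simp
  · exact ev_inj_aux hx (h σ)
  · rw [vd_some hx (φ σ), vd_some hx (ψ σ)]

/-- Put an element of `A` into the group attached to a vertex. -/
noncomputable def put : ∀ (x : WalkingCospan), A → ((Vdiag A).obj x : Type u) := fun x a => match x, a with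
  | none, a => a
  | some _, _ => 0

lemma map_toNone_put {x : WalkingCospan} (hx : x = none) (a : A) :
    (Vdiag A).map (toNoneHom x) (put x a) = a := by
  subst hx
  rw [show toNoneHom none = WidePullbackShape.Hom.id none from rfl, WidePullbackShape.hom_id,
    CategoryTheory.Functor.map_id]
  rfl

/-- The cochain associated to a function on chains. -/
noncomputable def putC {n : ℕ} (a : Ch n → A) : ((KK A).X n : Type u) :=
  fun σ => put (σ.obj (Fin.last n)) (a σ)

lemma ev_putC {n : ℕ} (a : Ch n → A) {σ : Ch n} (hσ : σ.obj (Fin.last n) = none) :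
    ev (putC a) σ = a σ :=
  map_toNone_put hσ (a σ)

/-- The `i`-th face of a chain. -/
def face {n : ℕ} (i : Fin (n+2)) (τ : Ch (n+1)) : Ch n :=
  (nerve WalkingCospan).map (SimplexCategory.δ i).op τ

lemma face_obj {n : ℕ} (i : Fin (n+2)) (τ : Ch (n+1)) (q : Fin (n+1)) :
    (face i τ).obj q = τ.obj (i.succAbove q) := rfl


/-- Build a chain from objects and a proof that consecutive homs exist. -/
noncomputable def mkChain {n : ℕ} (f : Fin (n+1) → WalkingCospan)
    (hf : ∀ i : Fin n, Nonempty ((f i.castSucc) ⟶ (f i.succ))) : Ch n :=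
  ComposableArrows.mkOfObjOfMapSucc f (fun i => (hf i).some)

@[simp] lemma mkChain_obj {n : ℕ} (f : Fin (n+1) → WalkingCospan)
    (hf : ∀ i : Fin n, Nonempty ((f i.castSucc) ⟶ (f i.succ))) (i : Fin (n+1)) :
    (mkChain f hf).obj i = f i := rfl

/-- Extend a chain by appending the terminal vertex `none`. -/
noncomputable def extC {n : ℕ} (σ : Ch n) : Ch (n+1) :=
  mkChain (fun q => if h : (q : ℕ) < n+1 then σ.obj ⟨q, h⟩ else none)
    (fun i => by
      by_cases h : (i.succ : ℕ) < n+1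
      · have h' : (i.castSucc : ℕ) < n+1 := by
          have := i.isLt; simp only [Fin.coe_castSucc]; omega
        rw [dif_pos h', dif_pos h]
        exact ⟨σ.map (homOfLE (by simp only [Fin.mk_le_mk, Fin.coe_castSucc, Fin.val_succ]; omega))⟩
      · rw [dif_neg h]
        exact ⟨toNoneHom _⟩)

lemma extC_obj {n : ℕ} (σ : Ch n) (q : Fin (n+2)) :
    (extC σ).obj q = if h : (q : ℕ) < n+1 then σ.obj ⟨q, h⟩ else none := rfl

/-- Duplicate the initial vertex of a chain. -/
noncomputable def dblC {n : ℕ} (σ : Ch n) : Ch (n+1) :=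
  mkChain (fun q => σ.obj ⟨(q : ℕ) - 1, by have := q.isLt; omega⟩)
    (fun i => ⟨σ.map (homOfLE (by
      simp only [Fin.mk_le_mk, Fin.coe_castSucc, Fin.val_succ]; omega))⟩)

lemma dblC_obj {n : ℕ} (σ : Ch n) (q : Fin (n+2)) :
    (dblC σ).obj q = σ.obj ⟨(q : ℕ) - 1, by have := q.isLt; omega⟩ := rfl

/-- The constant chain. -/
noncomputable def cstC (x : WalkingCospan) (n : ℕ) : Ch n :=
  mkChain (fun _ => x) (fun _ => ⟨𝟙 x⟩)

lemma cstC_obj (x : WalkingCospan) (n : ℕ) (q : Fin (n+1)) : (cstC x n).obj q = x := rfl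

/-- The sum of alternating signs. -/
lemma signsum (k : ℕ) (x : A) :
    ∑ i : Fin k, ((-1:ℤ)^(i:ℕ)) • x = if Even k then 0 else x := by
  induction k with
  | zero => simp
  | succ k ih =>
    rw [Fin.sum_univ_castSucc]
    simp only [Fin.coe_castSucc, Fin.val_last]
    rw [ih]
    by_cases h : Even k
    · rw [if_pos h, if_neg (by simpa [Nat.even_add_one] using h), h.neg_one_pow, zero_add, one_smul]
    · rw [if_neg h, if_pos (by simpa [Nat.even_add_one] using h),
        (Nat.not_even_iff_odd.1 h).neg_one_pow, neg_smul, one_smul, add_neg_cancel]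

lemma hom_sum_apply {X Y : AddCommGrpCat.{u}} {ι : Type} (s : Finset ι) (f : ι → (X ⟶ Y)) (x : X) :
    (∑ i ∈ s, f i) x = ∑ i ∈ s, f i x := by
  classical
  induction s using Finset.induction with
  | empty => show (0 : X →+ Y) x = 0; rfl
  | insert _ _ h ih => rw [Finset.sum_insert h, Finset.sum_insert h, ← ih]; rfl

lemma pt_sum_apply {n : ℕ} {ι : Type} (s : Finset ι) (f : ι → (((KK A).X n) : Type u))
    (τ : Ch n) : (∑ i ∈ s, f i) τ = ∑ i ∈ s, f i τ := by
  classical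
  induction s using Finset.induction with
  | empty => rfl
  | insert _ _ h ih => rw [Finset.sum_insert h, Finset.sum_insert h, ← ih]; rfl

/-- The key formula for the differential. -/
lemma ev_d {n : ℕ} (φ : ((KK A).X n : Type u)) (τ : Ch (n+1)) :
    ev ((KK A).d n (n+1) φ) τ = ∑ i : Fin (n+2), (-1:ℤ)^(i:ℕ) • ev φ (face i τ) := by
  have hd : (KK A).d n (n+1) = AlgebraicTopology.AlternatingCofaceMapComplex.objD
      (barCosimplicial (CategoryTheory.Prod.snd WalkingCospanᵒᵖ WalkingCospan ⋙ Vdiag A)) n :=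
    by simp only [KK, cochainComplex, alternatingCofaceMapComplex, AlternatingCofaceMapComplex.obj,
      CochainComplex.of_d]
  rw [hd, AlgebraicTopology.AlternatingCofaceMapComplex.objD]
  unfold ev
  erw [hom_sum_apply, pt_sum_apply, map_sum]
  refine Finset.sum_congr rfl fun i _ => ?_
  show (Vdiag A).map (toNoneHom _) ((-1:ℤ)^(i:ℕ) •
      (Vdiag A).map (τ.map (homOfLE (Fin.le_last _))) (φ (face i τ))) = _
  rw [map_zsmul]
  congr 1
  have key : ∀ {x y z : WalkingCospan} (f : x ⟶ y) (g : y ⟶ z) (g' : x ⟶ z)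
      (a : ((Vdiag A).obj x : Type u)), (Vdiag A).map g ((Vdiag A).map f a) = (Vdiag A).map g' a := by
    intro x y z f g g' a
    rw [← ConcreteCategory.comp_apply, ← (Vdiag A).map_comp, hom_subsingleton (f ≫ g) g']
  exact key _ _ _ _


lemma succAbove_val {k : ℕ} (i : Fin (k+1)) (q : Fin k) :
    ((i.succAbove q) : ℕ) = if (q : ℕ) < (i : ℕ) then (q : ℕ) else (q : ℕ)+1 := by
  rw [Fin.succAbove]
  rcases lt_or_ge ((q : ℕ)) ((i : ℕ)) with h | h
  · rw [if_pos (by rwa [Fin.lt_def, Fin.coe_castSucc]), if_pos h, Fin.coe_castSucc]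
  · rw [if_neg (by rw [Fin.lt_def, Fin.coe_castSucc]; omega), if_neg (by omega), Fin.val_succ]

lemma obj_congr {k : ℕ} (τ : Ch k) {i j : Fin (k+1)} (h : (i:ℕ) = (j:ℕ)) :
    τ.obj i = τ.obj j := congrArg τ.obj (Fin.ext h)

section ChainFacts

variable {m : ℕ}

lemma face_end_of_le {i : Fin (m+2)} (h : (i:ℕ) ≤ m) (τ : Ch (m+1)) :
    (face i τ).obj (Fin.last m) = τ.obj (Fin.last (m+1)) := by
  rw [face_obj]
  exact obj_congr τ (by rw [succAbove_val, Fin.val_last, Fin.val_last, if_neg (by omega)])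

lemma face_end_last (τ : Ch (m+1)) :
    (face (Fin.last (m+1)) τ).obj (Fin.last m) = τ.obj ⟨m, by omega⟩ := by
  rw [face_obj]
  exact obj_congr τ (by rw [succAbove_val, Fin.val_last, Fin.val_last, if_pos (by omega)])

/-- G1 -/
lemma face_last_extC (τ : Ch (m+1)) : face (Fin.last (m+2)) (extC τ) = τ := by
  apply chain_ext; intro q
  rw [face_obj, extC_obj]
  have hv : (((Fin.last (m+2)).succAbove q) : ℕ) = (q : ℕ) := by
    rw [succAbove_val, Fin.val_last, if_pos q.isLt]
  rw [dif_pos (show _ < m+2 by rw [hv]; exact q.isLt)]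
  exact obj_congr τ hv

/-- G2 -/
lemma face_castSucc_extC (i : Fin (m+2)) (τ : Ch (m+1)) :
    face (Fin.castSucc i) (extC τ) = extC (face i τ) := by
  apply chain_ext; intro q
  rw [face_obj, extC_obj, extC_obj]
  by_cases hq : (q : ℕ) < m+1
  · have hv : (((Fin.castSucc i).succAbove q) : ℕ) = ((i.succAbove ⟨(q:ℕ), hq⟩) : ℕ) := by
      rw [succAbove_val, succAbove_val, Fin.coe_castSucc]
    rw [dif_pos (show _ < m+2 by rw [hv]; exact (i.succAbove ⟨(q:ℕ), hq⟩).isLt), dif_pos hq,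
      face_obj]
    exact obj_congr τ hv
  · rw [dif_neg (by
      rw [succAbove_val, Fin.coe_castSucc]
      have h1 := i.isLt; have h2 := q.isLt
      split_ifs <;> omega), dif_neg hq]

/-- G3 -/
lemma face_m_eq_face_last (τ : Ch (m+1)) (h : τ.obj ⟨m, by omega⟩ = τ.obj (Fin.last (m+1))) :
    face (Fin.castSucc (Fin.last m)) τ = face (Fin.last (m+1)) τ := by
  apply chain_ext; intro q
  rw [face_obj, face_obj]
  by_cases hq : (q : ℕ) < m
  · exact obj_congr τ (by
      rw [succAbove_val, succAbove_val, Fin.coe_castSucc, Fin.val_last, Fin.val_last,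
        if_pos hq, if_pos (by omega)])
  · have hqm : (q : ℕ) = m := by have := q.isLt; omega
    calc τ.obj ((Fin.castSucc (Fin.last m)).succAbove q)
        = τ.obj (Fin.last (m+1)) := obj_congr τ (by
          rw [succAbove_val, Fin.coe_castSucc, Fin.val_last, Fin.val_last, if_neg hq, hqm])
      _ = τ.obj ⟨m, by omega⟩ := h.symm
      _ = τ.obj ((Fin.last (m+1)).succAbove q) := obj_congr τ (by
          rw [succAbove_val, Fin.val_last, if_pos (by omega), hqm])

/-- G4 -/
lemma face_castSucc_eq_face_zero (τ : Ch (m+1)) {j : WalkingPair}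
    (allj : ∀ q : Fin (m+2), (q:ℕ) ≤ m → τ.obj q = some j) (i : Fin (m+1)) :
    face (Fin.castSucc i) τ = face (0 : Fin (m+2)) τ := by
  apply chain_ext; intro q
  rw [face_obj, face_obj]
  by_cases hq : (q : ℕ) < (i : ℕ)
  · rw [allj _ (by rw [succAbove_val, Fin.coe_castSucc, if_pos hq]; have := i.isLt; omega),
      allj _ (by rw [succAbove_val, Fin.val_zero, if_neg (by omega)]; have := i.isLt; omega)]
  · exact obj_congr τ (by
      rw [succAbove_val, succAbove_val, Fin.coe_castSucc, Fin.val_zero,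
        if_neg hq, if_neg (by omega)])

/-- G5 -/
lemma extC_face_last (τ : Ch (m+1)) (hend : τ.obj (Fin.last (m+1)) = none) :
    extC (face (Fin.last (m+1)) τ) = τ := by
  apply chain_ext; intro q
  rw [extC_obj]
  by_cases hq : (q : ℕ) < m+1
  · rw [dif_pos hq, face_obj]
    exact obj_congr τ (by rw [succAbove_val, Fin.val_last, if_pos (by omega)])
  · rw [dif_neg hq]
    have hqv : q = Fin.last (m+1) := Fin.ext (by rw [Fin.val_last]; have := q.isLt; omega)
    rw [hqv, hend]

/-- G6 -/
lemma dblC_face_zero (hm : 1 ≤ m) (τ : Ch (m+1)) {j : WalkingPair}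
    (allj : ∀ q : Fin (m+2), (q:ℕ) ≤ m → τ.obj q = some j) :
    dblC (face (0 : Fin (m+2)) τ) = τ := by
  apply chain_ext; intro q
  rw [dblC_obj, face_obj]
  by_cases hq : 1 ≤ (q : ℕ)
  · exact obj_congr τ (by
      rw [succAbove_val, Fin.val_zero, if_neg (by omega)]; simp only [Fin.val_mk]
      have := q.isLt; omega)
  · rw [allj _ (by
      rw [succAbove_val, Fin.val_zero, if_neg (by omega)]; simp only [Fin.val_mk]
      omega), allj _ (by omega)]

/-- G7 -/
lemma face_castSucc_dblC (τ : Ch (m+1)) {j : WalkingPair}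
    (allj : ∀ q : Fin (m+2), (q:ℕ) ≤ m → τ.obj q = some j) (i : Fin (m+2)) :
    face (Fin.castSucc i) (dblC τ) = τ := by
  apply chain_ext; intro q
  rw [face_obj, dblC_obj]
  by_cases hq : (q : ℕ) < (i : ℕ)
  · have hv : (((Fin.castSucc i).succAbove q) : ℕ) = (q : ℕ) := by
      rw [succAbove_val, Fin.coe_castSucc, if_pos hq]
    rw [allj _ (by simp only [Fin.val_mk, hv]; have := i.isLt; omega),
      allj _ (by have := i.isLt; omega)]
  · have hv : (((Fin.castSucc i).succAbove q) : ℕ) = (q : ℕ) + 1 := by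
      rw [succAbove_val, Fin.coe_castSucc, if_neg hq]
    exact obj_congr τ (by simp only [Fin.val_mk, hv]; omega)

/-- G8 -/
lemma face_last_dblC_end (τ : Ch (m+1)) :
    (face (Fin.last (m+2)) (dblC τ)).obj (Fin.last (m+1)) = τ.obj ⟨m, by omega⟩ := by
  rw [face_obj, dblC_obj]
  have hv : (((Fin.last (m+2)).succAbove (Fin.last (m+1))) : ℕ) = m+1 := by
    rw [succAbove_val, Fin.val_last, Fin.val_last, if_pos (by omega)]
  exact obj_congr τ (by simp only [Fin.val_mk, hv]; omega)

end ChainFacts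


section Exactness

variable {m : ℕ}

/-- The cocycle identity evaluated on extended chains. -/
lemma star (φ : ((KK A).X (m+1) : Type u)) (hφ : (KK A).d (m+1) (m+2) φ = 0) (τ : Ch (m+1)) :
    ∑ i : Fin (m+2), (-1:ℤ)^(i:ℕ) • ev φ (extC (face i τ)) = (-1:ℤ)^(m+1) • ev φ τ := by
  have h0 := ev_d φ (extC τ)
  rw [hφ, ev_zero, Fin.sum_univ_castSucc] at h0
  simp only [Fin.coe_castSucc, Fin.val_last] at h0
  rw [face_last_extC τ] at h0
  rw [show (∑ i : Fin (m+2), (-1:ℤ)^(i:ℕ) • ev φ (face (Fin.castSucc i) (extC τ)))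
      = ∑ i : Fin (m+2), (-1:ℤ)^(i:ℕ) • ev φ (extC (face i τ)) from
    Finset.sum_congr rfl fun i _ => by rw [face_castSucc_extC]] at h0
  have hpow : ((-1:ℤ))^(m+2) = -(-1:ℤ)^(m+1) := by ring
  rw [hpow, neg_smul] at h0
  exact sub_eq_zero.mp (by rw [sub_eq_add_neg]; exact h0.symm)

/-- The correction term. -/
noncomputable def corr (φ : ((KK A).X (m+1) : Type u)) (σ : Ch m) : A :=
  open Classical in
  if Even m ∧ σ.obj (Fin.last m) = none ∧ (∃ j, σ.obj ⟨m-1, by omega⟩ = some j)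
  then ev φ (dblC σ) else 0

/-- The contracting cochain. -/
noncomputable def psiFun (φ : ((KK A).X (m+1) : Type u)) : Ch m → A :=
  fun σ => (-1:ℤ)^(m+1) • ev φ (extC σ) + corr φ σ


lemma exact_succ (hm : 1 ≤ m) (φ : ((KK A).X (m+1) : Type u))
    (hφ : (KK A).d (m+1) (m+2) φ = 0) :
    ∃ ψ : ((KK A).X m : Type u), (KK A).d m (m+1) ψ = φ := by
  refine ⟨putC (psiFun φ), cochain_ext fun τ => ?_⟩
  rw [ev_d]
  rcases hend : τ.obj (Fin.last (m+1)) with _ | j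
  case some =>
    -- Case A : τ ends at `some j`
    rw [ev_ends_some hend]
    refine Finset.sum_eq_zero fun i _ => ?_
    by_cases hi : (i:ℕ) ≤ m
    · rw [ev_ends_some (show (face i τ).obj (Fin.last m) = some j by
        rw [face_end_of_le hi]; exact hend), smul_zero]
    · have hil : i = Fin.last (m+1) := Fin.ext (by rw [Fin.val_last]; have := i.isLt; omega)
      subst hil
      rw [ev_ends_some (show (face (Fin.last (m+1)) τ).obj (Fin.last m) = some j by
        rw [face_end_last]
        exact obj_eq_some_of_le τ (by rw [Fin.le_def, Fin.val_last]; omega) hend), smul_zero]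
  case none =>
    rcases hprev : τ.obj ⟨m, by omega⟩ with _ | j
    case none =>
      -- Case B : the last two vertices of τ are `none`
      have hBface : ∀ i : Fin (m+2), (face i τ).obj (Fin.last m) = none := by
        intro i
        by_cases hi : (i:ℕ) ≤ m
        · rw [face_end_of_le hi]; exact hend
        · have hil : i = Fin.last (m+1) := Fin.ext (by rw [Fin.val_last]; have := i.isLt; omega)
          rw [hil, face_end_last]; exact hprev
      calc ∑ i : Fin (m+2), (-1:ℤ)^(i:ℕ) • ev (putC (psiFun φ)) (face i τ)
          = ∑ i : Fin (m+2), ((-1:ℤ)^(m+1) • ((-1:ℤ)^(i:ℕ) • ev φ (extC (face i τ)))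
              + (-1:ℤ)^(i:ℕ) • corr φ (face i τ)) :=
            Finset.sum_congr rfl fun i _ => by
              rw [ev_putC _ (hBface i)]
              show (-1:ℤ)^(i:ℕ) • ((-1:ℤ)^(m+1) • ev φ (extC (face i τ)) + corr φ (face i τ)) = _
              rw [smul_add, smul_comm]
        _ = (-1:ℤ)^(m+1) • (∑ i : Fin (m+2), (-1:ℤ)^(i:ℕ) • ev φ (extC (face i τ)))
              + ∑ i : Fin (m+2), (-1:ℤ)^(i:ℕ) • corr φ (face i τ) := by
            rw [Finset.sum_add_distrib, Finset.smul_sum]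
        _ = ev φ τ := by
            rw [star φ hφ τ, smul_smul, ← pow_add,
              Even.neg_one_pow (⟨m+1, by omega⟩ : Even ((m+1)+(m+1))), one_smul]
            rw [show (∑ i : Fin (m+2), (-1:ℤ)^(i:ℕ) • corr φ (face i τ)) = 0 from ?_, add_zero]
            rw [Fin.sum_univ_castSucc, Fin.sum_univ_castSucc]
            simp only [Fin.coe_castSucc, Fin.val_last]
            have hz : ∀ i : Fin m,
                corr φ (face (Fin.castSucc (Fin.castSucc i)) τ) = 0 := by
              intro i
              have hnone : (face (Fin.castSucc (Fin.castSucc i)) τ).obj ⟨m-1, by omega⟩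
                  = none := by
                rw [face_obj]
                rw [obj_congr τ (show (((Fin.castSucc (Fin.castSucc i)).succAbove
                    ⟨m-1, by omega⟩) : ℕ) = ((⟨m, by omega⟩ : Fin (m+2)) : ℕ) by
                  rw [succAbove_val, Fin.coe_castSucc, Fin.coe_castSucc]
                  simp only [Fin.val_mk]
                  have := i.isLt
                  split_ifs <;> omega)]
                exact hprev
              unfold corr
              rw [if_neg]
              rintro ⟨-, -, j', hj'⟩
              rw [hnone] at hj'
              cases hj'
            rw [Finset.sum_eq_zero fun i _ => by rw [hz i, smul_zero]]
            rw [face_m_eq_face_last τ (by rw [hprev, hend])]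
            rw [pow_succ, mul_neg_one, neg_smul, zero_add, add_neg_cancel]
    case some =>
      -- Case C : τ = (j, ..., j, none)
      have allj : ∀ q : Fin (m+2), (q:ℕ) ≤ m → τ.obj q = some j := fun q hq =>
        obj_eq_some_of_le τ (show q ≤ ⟨m, by omega⟩ by rw [Fin.le_def]; exact hq) hprev
      rw [Fin.sum_univ_castSucc]
      simp only [Fin.coe_castSucc, Fin.val_last]
      rw [ev_ends_some (show (face (Fin.last (m+1)) τ).obj (Fin.last m) = some j by
        rw [face_end_last]; exact hprev), smul_zero, add_zero]
      rw [show (∑ i : Fin (m+1), (-1:ℤ)^(i:ℕ) • ev (putC (psiFun φ)) (face (Fin.castSucc i) τ))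
          = ∑ i : Fin (m+1), (-1:ℤ)^(i:ℕ) • ev (putC (psiFun φ)) (face (0 : Fin (m+2)) τ) from
        Finset.sum_congr rfl fun i _ => by rw [face_castSucc_eq_face_zero τ allj i]]
      rw [signsum]
      have hσ₀end : (face (0 : Fin (m+2)) τ).obj (Fin.last m) = none := by
        rw [face_end_of_le (by simp)]; exact hend
      rcases Nat.even_or_odd m with hpar | hpar
      · -- m even : the correction does the job
        rw [if_neg (by rw [Nat.even_add_one]; exact fun h => h hpar)]
        rw [ev_putC _ hσ₀end]
        have hσ₀prev : (face (0 : Fin (m+2)) τ).obj ⟨m-1, by omega⟩ = some j := by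
          rw [face_obj]
          rw [obj_congr τ (show (((0 : Fin (m+2)).succAbove ⟨m-1, by omega⟩) : ℕ)
              = ((⟨m, by omega⟩ : Fin (m+2)) : ℕ) by
            rw [succAbove_val, Fin.val_zero, if_neg (by omega)]
            simp only [Fin.val_mk]; omega)]
          exact hprev
        have hcorr : corr φ (face (0 : Fin (m+2)) τ) = ev φ (dblC (face (0 : Fin (m+2)) τ)) := by
          unfold corr
          rw [if_pos ⟨hpar, hσ₀end, j, hσ₀prev⟩]
        have hext0 : ev φ (extC (face (0 : Fin (m+2)) τ)) = 0 := by
          have hstar := star φ hφ τ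
          rw [Fin.sum_univ_castSucc] at hstar
          simp only [Fin.coe_castSucc, Fin.val_last] at hstar
          rw [extC_face_last τ hend] at hstar
          rw [show (∑ i : Fin (m+1), (-1:ℤ)^(i:ℕ) • ev φ (extC (face (Fin.castSucc i) τ)))
              = ∑ i : Fin (m+1), (-1:ℤ)^(i:ℕ) • ev φ (extC (face (0 : Fin (m+2)) τ)) from
            Finset.sum_congr rfl fun i _ => by rw [face_castSucc_eq_face_zero τ allj i]] at hstar
          rw [signsum, if_neg (by rw [Nat.even_add_one]; exact fun h => h hpar)] at hstar
          exact add_right_cancel (b := (-1:ℤ)^(m+1) • ev φ τ) (by rw [zero_add]; exact hstar)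
        show (-1:ℤ)^(m+1) • ev φ (extC (face (0 : Fin (m+2)) τ)) + corr φ (face (0 : Fin (m+2)) τ)
            = ev φ τ
        rw [hext0, smul_zero, zero_add, hcorr, dblC_face_zero hm τ allj]
      · -- m odd : both sides vanish
        rw [if_pos (Nat.even_add_one.mpr (Nat.not_even_iff_odd.mpr hpar))]
        have h0 := ev_d φ (dblC τ)
        rw [hφ, ev_zero, Fin.sum_univ_castSucc] at h0
        simp only [Fin.coe_castSucc, Fin.val_last] at h0
        rw [ev_ends_some (show (face (Fin.last (m+2)) (dblC τ)).obj (Fin.last (m+1)) = some j by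
          rw [face_last_dblC_end]; exact hprev), smul_zero, add_zero] at h0
        rw [show (∑ i : Fin (m+2), (-1:ℤ)^(i:ℕ) • ev φ (face (Fin.castSucc i) (dblC τ)))
            = ∑ i : Fin (m+2), (-1:ℤ)^(i:ℕ) • ev φ τ from
          Finset.sum_congr rfl fun i _ => by rw [face_castSucc_dblC τ allj i]] at h0
        rw [signsum, if_neg (by
          rw [show m+2 = (m+1)+1 from rfl, Nat.even_add_one, Nat.even_add_one]
          intro h; exact h (fun h' => (Nat.not_even_iff_odd.mpr hpar) h'))] at h0
        exact h0

end Exactness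

section LowDegrees

lemma face_obj_val {n : ℕ} (i : Fin (n+2)) (τ : Ch (n+1)) (q : Fin (n+1)) (r : Fin (n+2))
    (h : ((i.succAbove q) : ℕ) = (r : ℕ)) : (face i τ).obj q = τ.obj r := by
  rw [face_obj]; exact obj_congr τ h

/-- The chain `some j ⟶ none` in `Ch 1`. -/
noncomputable def seg (j : WalkingPair) : Ch 1 :=
  mkChain ![some j, none] (fun i => by
    fin_cases i
    exact ⟨toNoneHom (some j)⟩)

lemma seg_obj_zero (j : WalkingPair) : (seg j).obj 0 = some j := rfl

lemma seg_obj_last (j : WalkingPair) : (seg j).obj (Fin.last 1) = none := rfl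

lemma cstC_obj_last (x : WalkingCospan) (n : ℕ) : (cstC x n).obj (Fin.last n) = x := rfl

lemma ev_d_two (φ : ((KK A).X 0 : Type u)) (τ : Ch 1) :
    ev ((KK A).d 0 1 φ) τ = ev φ (face (0 : Fin 2) τ) - ev φ (face (1 : Fin 2) τ) := by
  rw [ev_d, Fin.sum_univ_two]
  norm_num
  rw [sub_eq_add_neg]

lemma ev_d_three (φ : ((KK A).X 1 : Type u)) (ρ : Ch 2) :
    ev ((KK A).d 1 2 φ) ρ = ev φ (face (0 : Fin 3) ρ) - ev φ (face (1 : Fin 3) ρ)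
      + ev φ (face (2 : Fin 3) ρ) := by
  rw [ev_d, Fin.sum_univ_three]
  norm_num
  rw [sub_eq_add_neg]

/-- `d⁰` is injective. -/
lemma d0_inj (φ : ((KK A).X 0 : Type u)) (hφ : (KK A).d 0 1 φ = 0) : φ = 0 := by
  apply cochain_ext; intro σ
  rw [ev_zero]
  rcases hx : σ.obj (Fin.last 0) with _ | j
  · have hσ : σ = cstC none 0 := chain_ext fun q => by
      have hq : q = Fin.last 0 := Fin.ext (by rw [Fin.val_last]; have := q.isLt; omega)
      rw [hq, hx, cstC_obj]
    have h0 := congrArg (fun ψ => ev ψ (seg WalkingPair.left)) hφ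
    simp only at h0
    rw [ev_d_two, ev_zero] at h0
    rw [show face (0 : Fin 2) (seg WalkingPair.left) = cstC none 0 from chain_ext fun q => by
        have hq : q = Fin.last 0 := Fin.ext (by rw [Fin.val_last]; have := q.isLt; omega)
        rw [hq]
        rw [face_obj_val _ _ _ (Fin.last 1) (by decide), seg_obj_last, cstC_obj]] at h0
    rw [ev_ends_some (show (face (1 : Fin 2) (seg WalkingPair.left)).obj (Fin.last 0)
        = some WalkingPair.left by
      rw [face_obj_val _ _ _ (0 : Fin 2) (by decide), seg_obj_zero]) φ] at h0
    rw [hσ]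
    rw [sub_zero] at h0
    exact h0
  · exact ev_ends_some hx φ


lemma face_zero_seg (j : WalkingPair) : face (0 : Fin 2) (seg j) = cstC none 0 :=
  chain_ext fun q => by
    have hq : q = Fin.last 0 := Fin.ext (by rw [Fin.val_last]; have := q.isLt; omega)
    rw [hq, face_obj_val _ _ _ (Fin.last 1) (by decide), seg_obj_last, cstC_obj]

lemma face_one_seg (j : WalkingPair) : face (1 : Fin 2) (seg j) = cstC (some j) 0 :=
  chain_ext fun q => by
    have hq : q = Fin.last 0 := Fin.ext (by rw [Fin.val_last]; have := q.isLt; omega)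
    rw [hq, face_obj_val _ _ _ (0 : Fin 2) (by decide), cstC_obj]
    rfl

lemma face_cst_none (i : Fin 3) : face i (cstC none 2) = cstC none 1 :=
  chain_ext fun q => by rw [face_obj, cstC_obj, cstC_obj]

/-- A cocycle in degree 1 vanishes on the degenerate chain. -/
lemma ev_cst_none_eq_zero (φ : ((KK A).X 1 : Type u)) (hφ : (KK A).d 1 2 φ = 0) :
    ev φ (cstC none 1) = 0 := by
  have h0 := congrArg (fun ψ => ev ψ (cstC none 2)) hφ
  simp only at h0
  rw [ev_d_three, ev_zero, face_cst_none, face_cst_none, face_cst_none] at h0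
  rw [← h0]
  abel

lemma chain1_char_some (τ : Ch 1) {j : WalkingPair} (h0 : τ.obj 0 = some j)
    (h1 : τ.obj (Fin.last 1) = none) : τ = seg j :=
  chain_ext fun q => by
    by_cases hq : (q : ℕ) = 0
    · rw [show q = 0 from Fin.ext hq, h0]; rfl
    · rw [show q = Fin.last 1 from Fin.ext (by rw [Fin.val_last]; have := q.isLt; omega), h1]
      rfl

lemma chain1_char_none (τ : Ch 1) (h0 : τ.obj 0 = none)
    (h1 : τ.obj (Fin.last 1) = none) : τ = cstC none 1 :=
  chain_ext fun q => by
    by_cases hq : (q : ℕ) = 0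
    · rw [show q = 0 from Fin.ext hq, h0, cstC_obj]
    · rw [show q = Fin.last 1 from Fin.ext (by rw [Fin.val_last]; have := q.isLt; omega), h1,
        cstC_obj]

end LowDegrees

section H1

open Classical in
/-- The cocycle representing a given `x : A`. -/
noncomputable def xCochain (x : A) : ((KK A).X 1 : Type u) :=
  putC (fun σ => if σ.obj 0 = some WalkingPair.left then x else 0)

open Classical in
lemma ev_xCochain (x : A) (σ : Ch 1) (h : σ.obj (Fin.last 1) = none) :
    ev (xCochain x) σ = if σ.obj 0 = some WalkingPair.left then x else 0 :=
  ev_putC _ h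

lemma xCochain_closed (x : A) : (KK A).d 1 2 (xCochain x) = 0 := by
  apply cochain_ext; intro ρ
  rw [ev_zero, ev_d_three]
  have e00 : (face (0 : Fin 3) ρ).obj 0 = ρ.obj ⟨1, by omega⟩ := face_obj_val _ _ _ _ (by decide)
  have e01 : (face (0 : Fin 3) ρ).obj (Fin.last 1) = ρ.obj (Fin.last 2) :=
    face_obj_val _ _ _ _ (by decide)
  have e10 : (face (1 : Fin 3) ρ).obj 0 = ρ.obj 0 := face_obj_val _ _ _ _ (by decide)
  have e11 : (face (1 : Fin 3) ρ).obj (Fin.last 1) = ρ.obj (Fin.last 2) :=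
    face_obj_val _ _ _ _ (by decide)
  have e20 : (face (2 : Fin 3) ρ).obj 0 = ρ.obj 0 := face_obj_val _ _ _ _ (by decide)
  have e21 : (face (2 : Fin 3) ρ).obj (Fin.last 1) = ρ.obj ⟨1, by omega⟩ :=
    face_obj_val _ _ _ _ (by decide)
  rcases h2 : ρ.obj (Fin.last 2) with _ | j
  · rcases h1 : ρ.obj ⟨1, by omega⟩ with _ | j
    · rw [ev_xCochain _ _ (by rw [e01, h2]), ev_xCochain _ _ (by rw [e11, h2]),
        ev_xCochain _ _ (by rw [e21, h1]), e00, e10, e20, h1]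
      simp
    · have h0 : ρ.obj 0 = some j :=
        obj_eq_some_of_le ρ (show (0 : Fin 3) ≤ ⟨1, by omega⟩ by rw [Fin.le_def]; omega) h1
      rw [ev_xCochain _ _ (by rw [e01, h2]), ev_xCochain _ _ (by rw [e11, h2]),
        ev_ends_some (by rw [e21]; exact h1), e00, e10, h0, h1]
      simp
  · have h1 : ρ.obj ⟨1, by omega⟩ = some j :=
      obj_eq_some_of_le ρ (show (⟨1, by omega⟩ : Fin 3) ≤ Fin.last 2 by
        rw [Fin.le_def, Fin.val_last]; omega) h2
    rw [ev_ends_some (by rw [e01]; exact h2), ev_ends_some (by rw [e11]; exact h2),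
      ev_ends_some (by rw [e21]; exact h1)]
    simp

/-- The short complex at degree 1. -/
noncomputable abbrev SC1 (A : AddCommGrpCat.{u}) : ShortComplex AddCommGrpCat.{u} :=
  (KK A).sc' 0 1 2

lemma SC1_f : (SC1 A).f = (KK A).d 0 1 := rfl
lemma SC1_g : (SC1 A).g = (KK A).d 1 2 := rfl

/-- The evaluation homomorphism on cocycles. -/
noncomputable def wHom : AddMonoidHom (AddMonoidHom.ker (SC1 A).g.hom) A :=
  AddMonoidHom.mk' (fun x => ev x.1 (seg WalkingPair.left) - ev x.1 (seg WalkingPair.right))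
    (by
      intro a b
      show ev (a.1 + b.1) _ - ev (a.1 + b.1) _ = _
      refine (congrArg₂ (· - ·) (ev_add (n := 1) a.1 b.1 _) (ev_add (n := 1) a.1 b.1 _)).trans ?_
      abel)

lemma wHom_boundary (ψ : ((KK A).X 0 : Type u)) :
    wHom ((SC1 A).abToCycles ψ) = 0 := by
  show ev ((KK A).d 0 1 ψ) _ - ev ((KK A).d 0 1 ψ) _ = 0
  rw [ev_d_two, ev_d_two, face_zero_seg, face_one_seg, face_zero_seg, face_one_seg,
    ev_ends_some (show (cstC (some WalkingPair.left) 0).obj (Fin.last 0) = some _ from rfl),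
    ev_ends_some (show (cstC (some WalkingPair.right) 0).obj (Fin.last 0) = some _ from rfl)]
  abel

/-- The induced map from the concrete homology group. -/
noncomputable def qHom :
    AddMonoidHom ((AddMonoidHom.ker (SC1 A).g.hom) ⧸ AddMonoidHom.range (SC1 A).abToCycles) A :=
  QuotientAddGroup.lift _ wHom (by
    rintro y ⟨ψ, rfl⟩
    exact wHom_boundary ψ)

lemma qHom_surjective : Function.Surjective (qHom (A := A)) := by
  intro x
  refine ⟨QuotientAddGroup.mk ⟨xCochain x, xCochain_closed x⟩, ?_⟩
  show ev (xCochain x) (seg WalkingPair.left) - ev (xCochain x) (seg WalkingPair.right) = x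
  rw [ev_xCochain _ _ (seg_obj_last _), ev_xCochain _ _ (seg_obj_last _),
    seg_obj_zero, seg_obj_zero]
  rw [if_pos rfl, if_neg (fun h => WalkingPair.noConfusion (Option.some.inj h)), sub_zero]

lemma qHom_injective : Function.Injective (qHom (A := A)) := by
  rw [injective_iff_map_eq_zero]
  intro q hq
  induction q using QuotientAddGroup.induction_on with
  | H x =>
    rw [QuotientAddGroup.eq_zero_iff]
    have hw : ev x.1 (seg WalkingPair.left) - ev x.1 (seg WalkingPair.right) = 0 := hq
    have hker : (KK A).d 1 2 x.1 = 0 := x.2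
    refine ⟨putC (fun _ => ev x.1 (seg WalkingPair.left)), Subtype.ext ?_⟩
    show (KK A).d 0 1 (putC (fun _ => ev x.1 (seg WalkingPair.left))) = x.1
    apply cochain_ext; intro τ
    rw [ev_d_two]
    have f0 : (face (0 : Fin 2) τ).obj (Fin.last 0) = τ.obj (Fin.last 1) :=
      face_obj_val _ _ _ _ (by decide)
    have f1 : (face (1 : Fin 2) τ).obj (Fin.last 0) = τ.obj 0 :=
      face_obj_val _ _ _ _ (by decide)
    rcases h1 : τ.obj (Fin.last 1) with _ | j
    · rcases h0 : τ.obj 0 with _ | j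
      · rw [ev_putC _ (by rw [f0]; exact h1), ev_putC _ (by rw [f1]; exact h0)]
        rw [chain1_char_none τ h0 h1, ev_cst_none_eq_zero x.1 hker]
        abel
      · rw [chain1_char_some τ h0 h1, face_zero_seg, face_one_seg,
          ev_putC _ (show (cstC none 0).obj (Fin.last 0) = none from rfl),
          ev_ends_some (j := j) (show (cstC (some j) 0).obj (Fin.last 0) = some j from rfl),
          sub_zero]
        cases j
        · rfl
        · rw [sub_eq_zero] at hw
          exact hw
    · have hs0 : (face (0 : Fin 2) τ).obj (Fin.last 0) = some j := by rw [f0]; exact h1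
      have hs1 : (face (1 : Fin 2) τ).obj (Fin.last 0) = some j := by
        rw [f1]
        exact obj_eq_some_of_le τ (show (0 : Fin 2) ≤ Fin.last 1 by rw [Fin.le_def]; omega) h1
      rw [ev_ends_some (j := j) h1 x.1, ev_ends_some (j := j) hs0, ev_ends_some (j := j) hs1,
        sub_zero]

/-- The first cohomology is `A`. -/
noncomputable def h1Iso (A : AddCommGrpCat.{u}) : (KK A).homology 1 ≅ A :=
  ((KK A).homologyIsoSc' 0 1 2 (CochainComplex.prev_nat_succ 0)
      ((ComplexShape.up ℕ).next_eq' (show (ComplexShape.up ℕ).Rel 1 2 by simp))).trans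
    (((SC1 A).abHomologyIso).trans
      (AddEquiv.toAddCommGrpIso (AddEquiv.ofBijective (qHom (A := A))
        ⟨qHom_injective, qHom_surjective⟩)))

end H1

end Statement2Aux


open Statement2Aux

/-- Let `V` be the category with three objects `a, b, c` and
non-identity morphisms `α : a ⟶ c`, `β : b ⟶ c`, and let `𝒜 : V ⥤ Ab` take the
value `A` at `c` and `0` at `a` and `b`.  Then `H⁰(V, 𝒜) = 0`, `H¹(V, 𝒜) ≅ A`, and
`Hⁿ(V, 𝒜) = 0` for `n ≥ 2`. -/
theorem statement2 (A : AddCommGrpCat.{u}) :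
    IsZero (diagCohomology (Vdiag A) 0) ∧
    Nonempty (diagCohomology (Vdiag A) 1 ≅ A) ∧
    ∀ n : ℕ, 2 ≤ n → IsZero (diagCohomology (Vdiag A) n) := by
  refine ⟨?_, ⟨h1Iso A⟩, ?_⟩
  · show IsZero ((KK A).homology 0)
    rw [← HomologicalComplex.exactAt_iff_isZero_homology,
      HomologicalComplex.exactAt_iff' (K := KK A) (i := 0) (j := 0) (k := 1)
        CochainComplex.prev_nat_zero
        ((ComplexShape.up ℕ).next_eq' (show (ComplexShape.up ℕ).Rel 0 1 by simp)),
      ShortComplex.ab_exact_iff]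
    intro x hx
    exact ⟨0, by rw [map_zero]; exact (d0_inj x hx).symm⟩
  · intro n hn
    obtain ⟨m, rfl⟩ : ∃ m, n = m + 2 := ⟨n - 2, by omega⟩
    show IsZero ((KK A).homology (m+2))
    rw [← HomologicalComplex.exactAt_iff_isZero_homology,
      HomologicalComplex.exactAt_iff' (K := KK A) (i := m+1) (j := m+2) (k := m+3)
        (CochainComplex.prev_nat_succ (m+1))
        ((ComplexShape.up ℕ).next_eq' (show (ComplexShape.up ℕ).Rel (m+2) (m+3) by simp)),
      ShortComplex.ab_exact_iff]
    intro x hx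
    exact exact_succ (by omega) x hx
end

section
/- For every functor f : C → D between small categories and every morphism α of D, the comma category 𝔉f↓α (of the functor 𝔉f : 𝔉C → 𝔉D over the object α of 𝔉D) is isomorphic to the factorization category 𝔉(f⟨α⟩). -/
/- Auxiliary general constructions -/

open CategoryTheory Limits Opposite Simplicial

universe w v u

namespace CatCohomology

/-- The category of factorizations `𝔉A` of a category `A` (Baues-Wirsching):
objects are the morphisms of `A`, and morphisms `g ⟶ h` are pairs `(α, β)` of
morphisms of `A` with `h = α ≫ g ≫ β`. -/
def FactCat (A : Type u) [Category.{v} A] : Type (max u v) := Arrow A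

namespace FactCat

variable {A : Type u} [Category.{v} A] {B : Type u} [Category.{v} B]

instance : Category.{v} (FactCat A) where
  Hom g h := { p : (h.left ⟶ g.left) × (g.right ⟶ h.right) // h.hom = p.1 ≫ g.hom ≫ p.2 }
  id g := ⟨(𝟙 _, 𝟙 _), by simp⟩
  comp {g h k} p q := ⟨(q.1.1 ≫ p.1.1, p.1.2 ≫ q.1.2), by
    obtain ⟨⟨p1, p2⟩, hp⟩ := p; obtain ⟨⟨q1, q2⟩, hq⟩ := q
    dsimp; rw [hq, hp]; simp⟩
  id_comp p := Subtype.ext (Prod.ext (by simp) (by simp))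
  comp_id p := Subtype.ext (Prod.ext (by simp) (by simp))
  assoc p q r := Subtype.ext (Prod.ext (by simp) (by simp))

/-- The codomain functor `cod : 𝔉A ⥤ A`. -/
def codF : FactCat A ⥤ A where
  obj g := g.right
  map p := p.1.2

/-- The functor `(dom, cod) : 𝔉A ⥤ Aᵒᵖ × A`. -/
def domcodF : FactCat A ⥤ Aᵒᵖ × A where
  obj g := (op g.left, g.right)
  map p := (p.1.1.op, p.1.2)

/-- The functor `𝔉f : 𝔉A ⥤ 𝔉B` induced by `f : A ⥤ B`. -/
def map (f : A ⥤ B) : FactCat A ⥤ FactCat B where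
  obj g := Arrow.mk (f.map g.hom)
  map {g h} p := ⟨(f.map p.1.1, f.map p.1.2), by
    obtain ⟨⟨p1, p2⟩, hp⟩ := p
    dsimp
    rw [hp]; simp⟩
  map_id g := Subtype.ext (Prod.ext (f.map_id _) (f.map_id _))
  map_comp p q := Subtype.ext (Prod.ext (f.map_comp _ _) (f.map_comp _ _))

/-- A morphism of `A` as an object of `𝔉A`. -/
def mk' {X Y : A} (f : X ⟶ Y) : FactCat A := Arrow.mk f

end FactCat

variable {Cf : Type u} [Category.{v} Cf] {Df : Type u} [Category.{v} Df] in
/-- The category `f⟨α⟩` associated to a functor `f : C ⥤ D` and a morphism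
`α : d ⟶ d'` of `D`: objects are factorizations `d ⟶ f c ⟶ d'` of `α` through `f`,
and morphisms are morphisms `ν : c ⟶ c'` making the two triangles commute. -/
structure fComma (f : Cf ⥤ Df) {d d' : Df} (α : d ⟶ d') : Type (max u v) where
  pt : Cf
  l : d ⟶ f.obj pt
  r : f.obj pt ⟶ d'
  w : l ≫ r = α

namespace fComma
variable {Cf : Type u} [Category.{v} Cf] {Df : Type u} [Category.{v} Df]
variable {f : Cf ⥤ Df} {d d' : Df} {α : d ⟶ d'}

instance : Category.{v} (fComma f α) where
  Hom x y := { ν : x.pt ⟶ y.pt // x.l ≫ f.map ν = y.l ∧ x.r = f.map ν ≫ y.r }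
  id x := ⟨𝟙 _, by simp⟩
  comp {x y z} p q := ⟨p.1 ≫ q.1, by
    constructor
    · rw [f.map_comp, ← Category.assoc, p.2.1, q.2.1]
    · rw [f.map_comp, Category.assoc, ← q.2.2]; exact p.2.2⟩
  id_comp u := Subtype.ext (by simp)
  comp_id u := Subtype.ext (by simp)
  assoc u v w := Subtype.ext (by simp)

end fComma

end CatCohomology

open CatCohomology

namespace CatCohomology
section Iso

variable {C : Type u} [SmallCategory C] {D : Type u} [SmallCategory D]
variable (f : C ⥤ D) {d d' : D} (α : d ⟶ d')

/-- Hom in `FactCat`, with the right instance. -/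
abbrev FactHom (g h : FactCat C) := g ⟶ h

lemma toFact_aux {c1 c2 c1' c2' : C} {g : c1 ⟶ c2} {g' : c1' ⟶ c2'}
    {a : c1' ⟶ c1} {b : c2 ⟶ c2'} (h3 : g' = a ≫ g ≫ b)
    {β2 : d ⟶ f.obj c1'} {β2' : f.obj c2' ⟶ d'} {β : d ⟶ f.obj c1} {β' : f.obj c2 ⟶ d'}
    (h1 : β = β2 ≫ f.map a) (h2 : β' = f.map b ≫ β2') :
    f.map g' ≫ β2' = f.map a ≫ f.map g ≫ β' ∧
    (β ≫ f.map g) ≫ f.map b = β2 ≫ f.map g' := by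
  subst h3 h1 h2
  constructor <;> simp

def toFactObjLeft (X : CostructuredArrow (FactCat.map f) (show FactCat D from Arrow.mk α)) : fComma f α where
  pt := X.left.left
  l := X.hom.1.1
  r := f.map X.left.hom ≫ X.hom.1.2
  w := X.hom.2.symm

def toFactObjRight (X : CostructuredArrow (FactCat.map f) (show FactCat D from Arrow.mk α)) : fComma f α where
  pt := X.left.right
  l := X.hom.1.1 ≫ f.map X.left.hom
  r := X.hom.1.2
  w := (Category.assoc _ _ _).trans X.hom.2.symm

def toFactObjHom (X : CostructuredArrow (FactCat.map f) (show FactCat D from Arrow.mk α)) :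
    toFactObjLeft f α X ⟶ toFactObjRight f α X :=
  ⟨X.left.hom, rfl, rfl⟩

def toFact : CostructuredArrow (FactCat.map f) (show FactCat D from Arrow.mk α) ⥤ FactCat (fComma f α) where
  obj X := Arrow.mk (toFactObjHom f α X)
  map {X Y} u := by
    have hw : (FactCat.map f).map u.left ≫ Y.hom = X.hom := CostructuredArrow.w u
    have h1 : (X.hom.1.1 : d ⟶ f.obj X.left.left) = Y.hom.1.1 ≫ f.map u.left.1.1 :=
      congrArg (fun p => p.1.1) hw.symm
    have h2 : (X.hom.1.2 : f.obj X.left.right ⟶ d') = f.map u.left.1.2 ≫ Y.hom.1.2 :=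
      congrArg (fun p => p.1.2) hw.symm
    have h3 : Y.left.hom = u.left.1.1 ≫ X.left.hom ≫ u.left.1.2 := u.left.2
    refine ⟨(⟨u.left.1.1, ?_, ?_⟩, ⟨u.left.1.2, ?_, ?_⟩), ?_⟩
    · exact h1.symm
    · exact (toFact_aux f h3 h1 h2).1
    · exact (toFact_aux f h3 h1 h2).2
    · exact h2
    · exact Subtype.ext h3
  map_id X := by
    apply Subtype.ext
    apply Prod.ext <;> apply Subtype.ext <;> rfl
  map_comp u v := by
    apply Subtype.ext
    apply Prod.ext <;> apply Subtype.ext <;> rfl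

def ofFactHom (W : FactCat (fComma f α)) :
    FactHom (Arrow.mk (f.map (W.hom.1 : W.left.pt ⟶ W.right.pt))) (Arrow.mk α) :=
  ⟨(W.left.l, W.right.r), by
    have h1 : W.left.l ≫ f.map W.hom.1 = W.right.l := W.hom.2.1
    have h2 : W.right.l ≫ W.right.r = α := W.right.w
    show α = W.left.l ≫ f.map W.hom.1 ≫ W.right.r
    rw [← Category.assoc, h1, h2]⟩

def ofFactObj (W : FactCat (fComma f α)) :
    CostructuredArrow (FactCat.map f) (show FactCat D from Arrow.mk α) where
  left := Arrow.mk (W.hom.1 : W.left.pt ⟶ W.right.pt)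
  right := ⟨⟨⟩⟩
  hom := ofFactHom f α W

def ofFactMapHom {W W' : FactCat (fComma f α)} (u : W ⟶ W') :
    FactHom (Arrow.mk (W.hom.1 : W.left.pt ⟶ W.right.pt))
      (Arrow.mk (W'.hom.1 : W'.left.pt ⟶ W'.right.pt)) :=
  ⟨(u.1.1.1, u.1.2.1), congrArg Subtype.val u.2⟩

def ofFact : FactCat (fComma f α) ⥤ CostructuredArrow (FactCat.map f) (show FactCat D from Arrow.mk α) where
  obj W := ofFactObj f α W
  map {W W'} u := CostructuredArrow.homMk (ofFactMapHom f α u)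
    (by
      apply Subtype.ext
      apply Prod.ext
      · exact u.1.1.2.1
      · exact u.1.2.2.2.symm)
  map_id W := by
    apply CostructuredArrow.hom_ext
    apply Subtype.ext
    rfl
  map_comp u v := by
    apply CostructuredArrow.hom_ext
    apply Subtype.ext
    rfl

lemma fComma_mk_ext {c : C} {l l' : d ⟶ f.obj c} {r r' : f.obj c ⟶ d'}
    {w : l ≫ r = α} {w' : l' ≫ r' = α} (hl : l = l') (hr : r = r') :
    (fComma.mk c l r w : fComma f α) = fComma.mk c l' r' w' := by
  subst hl; subst hr; rfl

lemma arrow_mk_ext {A : Type u} [Category.{v} A] {X Y X' Y' : A}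
    (hX : X = X') (hY : Y = Y') (h : X ⟶ Y) (h' : X' ⟶ Y')
    (hh : HEq h h') : (Arrow.mk h : Arrow A) = Arrow.mk h' := by
  subst hX; subst hY; subst hh; rfl

lemma fComma_hom_hext {x x' y y' : fComma f α} (hx : x = x') (hy : y = y')
    (p : x ⟶ y) (q : x' ⟶ y')
    (h : HEq (p.1 : x.pt ⟶ y.pt) (q.1 : x'.pt ⟶ y'.pt)) : HEq p q := by
  subst hx; subst hy
  exact heq_of_eq (Subtype.ext (eq_of_heq h))

lemma conj_helper {A A' B B' : FactCat (fComma f α)} (hA : A' = A) (hB : B = B')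
    (p : A' ⟶ B') (q : A ⟶ B)
    (h1 : HEq (p.1.1.1 : B'.left.pt ⟶ A'.left.pt) (q.1.1.1 : B.left.pt ⟶ A.left.pt))
    (h2 : HEq (p.1.2.1 : A'.right.pt ⟶ B'.right.pt) (q.1.2.1 : A.right.pt ⟶ B.right.pt)) :
    p = eqToHom hA ≫ q ≫ eqToHom hB := by
  subst hA; subst hB
  simp only [eqToHom_refl, Category.comp_id, Category.id_comp]
  exact Subtype.ext (Prod.ext (Subtype.ext (eq_of_heq h1)) (Subtype.ext (eq_of_heq h2)))

end Iso
end CatCohomology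

/-- For every functor `f : C ⥤ D` between small categories and every
morphism `α : d ⟶ d'` of `D`, the comma category `𝔉f ↓ α` is isomorphic (as a
category, i.e. by an invertible pair of functors) to the factorization category
`𝔉(f⟨α⟩)`. -/
theorem statement8 (C : Type u) [SmallCategory C] (D : Type u) [SmallCategory D]
    (f : C ⥤ D) {d d' : D} (α : d ⟶ d') :
    ∃ (F : CostructuredArrow (FactCat.map f) (show FactCat D from Arrow.mk α) ⥤ FactCat (fComma f α))
      (G : FactCat (fComma f α) ⥤ CostructuredArrow (FactCat.map f) (show FactCat D from Arrow.mk α)),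
      F ⋙ G = 𝟭 _ ∧ G ⋙ F = 𝟭 _ := by
  refine ⟨toFact f α, ofFact f α, ?_, ?_⟩
  · rfl
  · refine CategoryTheory.Functor.ext (fun W => ?_) (fun X Y u => ?_)
    · exact arrow_mk_ext (fComma_mk_ext f α rfl (W.hom.2.2.symm))
        (fComma_mk_ext f α (W.hom.2.1) rfl) _ _
        (fComma_hom_hext f α (fComma_mk_ext f α rfl (W.hom.2.2.symm))
          (fComma_mk_ext f α (W.hom.2.1) rfl) _ _ HEq.rfl)
    · exact conj_helper f α _ _ _ u HEq.rfl HEq.rfl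
end

section
/- Let C be a small category and (dom, cod) : 𝔉C → C^op × C the functor sending an object α of 𝔉C to (dom α, cod α). For any object (a, b) of C^op × C, the connected component of the comma category (dom, cod)↓(a, b) containing a given object (α, (x, y)) — where α is a morphism of C, x : a → dom α and y : cod α → b — has a terminal object, namely (y ∘ α ∘ x, (1_a, 1_b)). -/
/- Auxiliary general constructions -/

open CategoryTheory Limits Opposite Simplicial

universe w v u

open CatCohomology



section Aux

variable {C : Type u} [SmallCategory C] {a b : C}

/-- The composite `x ≫ α ≫ y` associated to an object of the comma category. -/
def phi (w : CostructuredArrow (FactCat.domcodF (A := C)) (op a, b)) : a ⟶ b :=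
  w.hom.1.unop ≫ w.left.hom ≫ w.hom.2

theorem phi_eq_of_hom {w w' : CostructuredArrow (FactCat.domcodF (A := C)) (op a, b)}
    (f : w ⟶ w') : phi w = phi w' := by
  have hw := CostructuredArrow.w f
  have h1 : w.hom.1 = f.left.1.1.op ≫ w'.hom.1 := congrArg Prod.fst hw.symm
  have h2 : w.hom.2 = f.left.1.2 ≫ w'.hom.2 := congrArg Prod.snd hw.symm
  have h3 : w'.left.hom = f.left.1.1 ≫ w.left.hom ≫ f.left.1.2 := f.left.2
  dsimp [phi]
  rw [h3, h1, h2]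
  exact (Category.assoc (w'.hom.1.unop) f.left.1.1 _).trans (congrArg (w'.hom.1.unop ≫ ·)
    ((Category.assoc f.left.1.1 (w.left.hom ≫ f.left.1.2) w'.hom.2).trans
      (congrArg (f.left.1.1 ≫ ·) (Category.assoc w.left.hom f.left.1.2 w'.hom.2))).symm)

theorem phi_eq_of_zigzag {w w' : CostructuredArrow (FactCat.domcodF (A := C)) (op a, b)}
    (h : Zigzag w w') : phi w = phi w' := by
  induction h with
  | refl => rfl
  | tail _ hz ih =>
    rcases hz with ⟨⟨f⟩⟩ | ⟨⟨f⟩⟩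
    · exact ih.trans (phi_eq_of_hom f)
    · exact ih.trans (phi_eq_of_hom f).symm

/-- The candidate terminal object. -/
def candObj (z : CostructuredArrow (FactCat.domcodF (A := C)) (op a, b)) :
    CostructuredArrow (FactCat.domcodF (A := C)) (op a, b) :=
  CostructuredArrow.mk (S := FactCat.domcodF (A := C))
    (Y := FactCat.mk' (z.hom.1.unop ≫ z.left.hom ≫ z.hom.2))
    (show (FactCat.domcodF (A := C)).obj
        (FactCat.mk' (z.hom.1.unop ≫ z.left.hom ≫ z.hom.2)) ⟶ (op a, b) from
      (𝟙 (op a), 𝟙 b))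

theorem phi_candObj (z : CostructuredArrow (FactCat.domcodF (A := C)) (op a, b)) :
    phi (candObj z) = phi z := by
  dsimp [phi, candObj, FactCat.mk']
  exact (Category.id_comp (X := a) _).trans (Category.comp_id _)

/-- The canonical morphism to the candidate. -/
def toCand (z w : CostructuredArrow (FactCat.domcodF (A := C)) (op a, b))
    (hw : phi w = phi z) : w ⟶ candObj z :=
  CostructuredArrow.homMk ⟨(w.hom.1.unop, w.hom.2), hw.symm⟩
    (by
      dsimp [candObj, FactCat.domcodF]
      exact Prod.ext (Category.comp_id _) (Category.comp_id _))

theorem toCand_unique (z w : CostructuredArrow (FactCat.domcodF (A := C)) (op a, b))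
    (hw : phi w = phi z) (m : w ⟶ candObj z) : m = toCand z w hw := by
  apply CostructuredArrow.hom_ext
  have hcw := CostructuredArrow.w m
  have h1 : m.left.1.1.op ≫ 𝟙 (op a) = w.hom.1 := congrArg Prod.fst hcw
  have h2 : m.left.1.2 ≫ 𝟙 b = w.hom.2 := congrArg Prod.snd hcw
  have h1' : m.left.1.1.op = w.hom.1 := (Category.comp_id _).symm.trans h1
  have h2' : m.left.1.2 = w.hom.2 := (Category.comp_id _).symm.trans h2
  apply Subtype.ext
  apply Prod.ext
  · exact congrArg Quiver.Hom.unop h1'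
  · exact h2'

end Aux

/-- Let `C` be a small category and `(dom, cod) : 𝔉C ⥤ Cᵒᵖ × C`.
For any object `(a, b)` of `Cᵒᵖ × C`, the connected component of the comma category
`(dom, cod) ↓ (a, b)` containing a given object `z = (α, (x, y))` has a terminal
object, namely `(y ∘ α ∘ x, (1ₐ, 1_b))`. -/
theorem statement10 (C : Type u) [SmallCategory C] (a b : C)
    (z : CostructuredArrow (FactCat.domcodF (A := C)) (op a, b)) :
    ∃ t : ObjectProperty.FullSubcategory
        (fun w : CostructuredArrow (FactCat.domcodF (A := C)) (op a, b) => Zigzag w z),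
      t.obj = CostructuredArrow.mk (S := FactCat.domcodF (A := C))
          (Y := FactCat.mk' (z.hom.1.unop ≫ z.left.hom ≫ z.hom.2))
          (show (FactCat.domcodF (A := C)).obj
              (FactCat.mk' (z.hom.1.unop ≫ z.left.hom ≫ z.hom.2)) ⟶ (op a, b) from
            (𝟙 (op a), 𝟙 b)) ∧
      Nonempty (IsTerminal t) := by
  refine ⟨⟨candObj z, Zigzag.of_inv (toCand z z rfl)⟩, rfl, ⟨IsTerminal.ofUniqueHom
    (fun w => ObjectProperty.homMk (toCand z w.obj (phi_eq_of_zigzag w.property))) ?_⟩⟩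
  intro w m
  exact ObjectProperty.hom_ext _ (toCand_unique z w.obj (phi_eq_of_zigzag w.property) m.hom)
end

section
/- Let f : C → D be a functor between small categories. The canonical homomorphism H^0_HM(D, G) → H^0_HM(C, G ∘ (f^op × f)) is an isomorphism for every bimodule G : D^op × D ⥤ Ab if and only if the canonical natural transformation Lan^{f^op × f} ℤC → ℤD is an isomorphism. -/
/- Auxiliary general constructions -/

open CategoryTheory Limits Opposite Simplicial

universe w v u

namespace CatCohomology

section ZCat
variable (C : Type u) [SmallCategory C] (D : Type u) [SmallCategory D]

/-- The bimodule `ℤC : Cᵒᵖ × C ⥤ Ab`: the composition of the hom bifunctor with the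
free abelian group functor. -/
noncomputable def ZCat : Cᵒᵖ × C ⥤ AddCommGrpCat.{u} :=
  Functor.hom C ⋙ AddCommGrpCat.free

variable {C D}

/-- The natural transformation `ℤC ⟶ (fᵒᵖ × f)^* ℤD` induced by the action of `f` on
hom-sets. -/
noncomputable def ZNat (f : C ⥤ D) : ZCat C ⟶ (f.op.prod f) ⋙ ZCat D :=
  Functor.whiskerRight
    ({ app := fun x => TypeCat.ofHom fun (g : x.1.unop ⟶ x.2) => f.map g
       naturality := by
        intro x y p
        ext g
        show f.map (p.1.unop ≫ g ≫ p.2) = _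
        show _ = f.map p.1.unop ≫ f.map g ≫ f.map p.2
        simp
        rw [Functor.map_comp (X := x.1.unop) (Y := x.2) (Z := y.2) f g p.2] } :
      Functor.hom C ⟶ (f.op.prod f) ⋙ Functor.hom D) AddCommGrpCat.free

/-- The canonical comparison morphism `Lan_{fᵒᵖ×f} ℤC ⟶ ℤD`, corresponding to `ZNat f`
under the adjunction `Lan ⊣ (fᵒᵖ×f)^*`. -/
noncomputable def lanComparison (f : C ⥤ D) :
    (f.op.prod f).lan.obj (ZCat C) ⟶ ZCat D :=
  ((Functor.lanAdjunction (f.op.prod f) AddCommGrpCat.{u}).homEquiv (ZCat C) (ZCat D)).symm (ZNat f)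

end ZCat

end CatCohomology

open CatCohomology

/-- Let `f : C ⥤ D` be a functor between small categories.  The
canonical homomorphism `H⁰_HM(D, G) = Hom(ℤD, G) ⟶ Hom(ℤC, G ∘ (fᵒᵖ × f)) =
H⁰_HM(C, G ∘ (fᵒᵖ × f))` is an isomorphism for every bimodule `G : Dᵒᵖ × D ⥤ Ab` if
and only if the canonical natural transformation `Lan_{fᵒᵖ × f} ℤC ⟶ ℤD` is an
isomorphism. -/
theorem statement13 (C : Type u) [SmallCategory C] (D : Type u) [SmallCategory D]
    (f : C ⥤ D) :
    (∀ G : Dᵒᵖ × D ⥤ AddCommGrpCat.{u},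
      Function.Bijective (fun ψ : ZCat D ⟶ G => ZNat f ≫ Functor.whiskerLeft (f.op.prod f) ψ)) ↔
    IsIso (lanComparison f) := by
  rw [isIso_iff_coyoneda_map_bijective]
  have funeq : ∀ G : Dᵒᵖ × D ⥤ AddCommGrpCat.{u},
      (fun ψ : ZCat D ⟶ G => ZNat f ≫ Functor.whiskerLeft (f.op.prod f) ψ) =
      (((Functor.lanAdjunction (f.op.prod f) AddCommGrpCat.{u}).homEquiv (ZCat C) G) : _ → _) ∘
      (fun ψ : ZCat D ⟶ G => lanComparison f ≫ ψ) := by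
    intro G
    funext ψ
    show _ = ((Functor.lanAdjunction (f.op.prod f) AddCommGrpCat.{u}).homEquiv (ZCat C) G)
      (lanComparison f ≫ ψ)
    rw [Adjunction.homEquiv_naturality_right, lanComparison, Equiv.apply_symm_apply]
    rfl
  constructor
  · intro h G
    have := h G
    rw [funeq G] at this
    exact (Equiv.comp_bijective _ _).mp this
  · intro h G
    rw [funeq G]
    exact (Equiv.comp_bijective _ _).mpr (h G)
end
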